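/- Let Br : ℝ × ℝ → [a,b] satisfy the Lipschitz conditions |Br(z,α) − Br(z',α)| ≤ L_z|z−z'| with L_z < 1 and |Br(z,α) − Br(z,α')| ≤ L|α−α'|. Let ν ∼ P and ν̂ₙ ∼ Pₙ be independent random variables, where Pₙ is the empirical distribution of α₁,...,αₙ. Let z* solve z = E_ν[Br(z,ν)] and ẑₙ solve z = (1/n)∑ᵢ Br(z, αᵢ). Then |ẑₙ − z*| ≤ (L/(1−L_z))·E[|ν − ν̂ₙ|]. -/

import Mathlib

open MeasureTheory Finset

/-- Error bound for the empirical-distribution-based approximation of the AEM: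
`|ẑₙ − z*| ≤ (L/(1−L_z)) · E[|ν − ν̂ₙ|]`, where `ν ∼ P` and `ν̂ₙ ∼ Pₙ` are independent,
so that `E[|ν − ν̂ₙ|] = (1/n) ∑ᵢ E_ν[|ν − αᵢ|]`. -/
theorem empirical_AEM_error
    (a b Lz L : ℝ) (Br : ℝ → ℝ → ℝ)
    (hrange : ∀ z α, Br z α ∈ Set.Icc a b)
    (hLz0 : 0 ≤ Lz) (hLz1 : Lz < 1) (hL0 : 0 ≤ L)
    (hLipz : ∀ z z' α, |Br z α - Br z' α| ≤ Lz * |z - z'|)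
    (hLipα : ∀ z α α', |Br z α - Br z α'| ≤ L * |α - α'|)
    (μ : Measure ℝ) [IsProbabilityMeasure μ]
    (hmeas : ∀ z, Measurable (fun α => Br z α))
    (n : ℕ) (hn : 1 ≤ n) (α : Fin n → ℝ)
    (hint : ∀ i, Integrable (fun x => |x - α i|) μ)
    (zstar zhat : ℝ)
    (hzstar : zstar = ∫ x, Br zstar x ∂μ)
    (hzhat : zhat = (1 / (n : ℝ)) * ∑ i, Br zhat (α i)) :
    |zhat - zstar| ≤ (L / (1 - Lz)) * ((1 / (n : ℝ)) * ∑ i, ∫ x, |x - α i| ∂μ) := by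
  have hn0 : (0:ℝ) < (n:ℝ) := by exact_mod_cast hn
  set S := (1 / (n : ℝ)) * ∑ i, ∫ x, |x - α i| ∂μ with hS
  have hBint : Integrable (fun x => Br zstar x) μ := by
    refine Integrable.mono' (integrable_const (max |a| |b|))
      (hmeas zstar).aestronglyMeasurable (ae_of_all _ fun x => ?_)
    have h := hrange zstar x
    simp only [Real.norm_eq_abs]
    rw [abs_le]
    refine ⟨?_, ?_⟩
    · have h1 : -|a| ≤ a := neg_abs_le a
      have h2 := h.1
      have hm : -(max |a| |b|) ≤ -|a| := by simp [le_max_left]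
      linarith
    · have h1 : b ≤ |b| := le_abs_self b
      have h2 := h.2
      have hm : |b| ≤ max |a| |b| := le_max_right _ _
      linarith
  have hterm : ∀ i, |Br zhat (α i) - ∫ x, Br zstar x ∂μ| ≤
      Lz * |zhat - zstar| + L * ∫ x, |x - α i| ∂μ := by
    intro i
    have h1 : |Br zhat (α i) - Br zstar (α i)| ≤ Lz * |zhat - zstar| := hLipz _ _ _
    have h2 : |Br zstar (α i) - ∫ x, Br zstar x ∂μ| ≤ L * ∫ x, |x - α i| ∂μ := by
      have heq : Br zstar (α i) - ∫ x, Br zstar x ∂μ = ∫ x, (Br zstar (α i) - Br zstar x) ∂μ := by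
        rw [integral_sub (integrable_const _) hBint, integral_const]
        simp
      rw [heq]
      have habs : |∫ x, (Br zstar (α i) - Br zstar x) ∂μ|
          ≤ ∫ x, |Br zstar (α i) - Br zstar x| ∂μ := by
        have := norm_integral_le_integral_norm (μ := μ)
          (f := fun x => Br zstar (α i) - Br zstar x)
        simpa [Real.norm_eq_abs] using this
      refine habs.trans ?_
      calc ∫ x, |Br zstar (α i) - Br zstar x| ∂μ
          ≤ ∫ x, L * |x - α i| ∂μ := by
            refine integral_mono_of_nonneg (ae_of_all _ fun x => abs_nonneg _)
              ((hint i).const_mul L) (ae_of_all _ fun x => ?_)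
            show |Br zstar (α i) - Br zstar x| ≤ L * |x - α i|
            have h3 := hLipα zstar (α i) x
            rwa [abs_sub_comm (α i) x] at h3
        _ = L * ∫ x, |x - α i| ∂μ := integral_const_mul L _
    calc |Br zhat (α i) - ∫ x, Br zstar x ∂μ|
        ≤ |Br zhat (α i) - Br zstar (α i)| + |Br zstar (α i) - ∫ x, Br zstar x ∂μ| :=
          abs_sub_le _ _ _
      _ ≤ Lz * |zhat - zstar| + L * ∫ x, |x - α i| ∂μ := add_le_add h1 h2
  have hkey : |zhat - zstar| ≤ Lz * |zhat - zstar| + L * S := by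
    have hsum : (1 / (n : ℝ)) * ∑ i, (Br zhat (α i) - ∫ x, Br zstar x ∂μ)
        = (1 / (n : ℝ)) * ∑ i, Br zhat (α i) - ∫ x, Br zstar x ∂μ := by
      rw [Finset.sum_sub_distrib, Finset.sum_const, Finset.card_univ, Fintype.card_fin]
      push_cast
      field_simp
      rw [nsmul_eq_mul]
    have hrw : zhat - zstar = (1 / (n : ℝ)) * ∑ i, (Br zhat (α i) - ∫ x, Br zstar x ∂μ) := by
      rw [hsum, ← hzhat, ← hzstar]
    have hb : |∑ i, (Br zhat (α i) - ∫ x, Br zstar x ∂μ)|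
        ≤ ∑ i, (Lz * |zhat - zstar| + L * ∫ x, |x - α i| ∂μ) :=
      (Finset.abs_sum_le_sum_abs _ _).trans (Finset.sum_le_sum fun i _ => hterm i)
    calc |zhat - zstar|
        = (1 / (n : ℝ)) * |∑ i, (Br zhat (α i) - ∫ x, Br zstar x ∂μ)| := by
          rw [hrw, abs_mul, abs_of_pos (by positivity : (0:ℝ) < 1 / (n:ℝ))]
      _ ≤ (1 / (n : ℝ)) * ∑ i, (Lz * |zhat - zstar| + L * ∫ x, |x - α i| ∂μ) :=
          mul_le_mul_of_nonneg_left hb (by positivity)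
      _ = Lz * |zhat - zstar| + L * S := by
          rw [Finset.sum_add_distrib, Finset.sum_const, Finset.card_univ, Fintype.card_fin,
            ← Finset.mul_sum, hS]
          field_simp
          ring
  have h1Lz : 0 < 1 - Lz := by linarith
  rw [div_mul_eq_mul_div, le_div_iff₀ h1Lz]
  nlinarith [hkey]
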